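/- Fix natural numbers n, l, d with d ≤ n, and let u, v be vertices of the n-dimensional hypercube graph Q_n with Hamming distance d. Then, as an identity of integers, 2^n · W_{n,l}(u,v) = Σ_{i=0}^{n} Σ_{j=0}^{d} 1_{{j ≤ i}} · binom(d, j) · binom(n−d, i−j) · (−1)^j · (n − 2i)^l, where W_{n,l}(u,v) denotes the number of walks of length l from u to v in Q_n and (n − 2i)^l is computed in ℤ. -/

import Mathlib

open SimpleGraph Finset

/-- The `n`-dimensional hypercube graph: vertices are `{0,1}^n`, two vertices being adjacent
iff they differ in exactly one coordinate (Hamming distance `1`). -/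
def cubeGraph (n : ℕ) : SimpleGraph (Fin n → Bool) where
  Adj u v := hammingDist u v = 1
  symm := by constructor; intro u v h; rwa [hammingDist_comm]
  loopless := by constructor; intro u h; simp [hammingDist_self] at h

/-- The number of walks of length `l` from `u` to `v` in the `n`-dimensional hypercube. -/
noncomputable def walkCount (n l : ℕ) (u v : Fin n → Bool) : ℕ :=
  Nat.card {p : (cubeGraph n).Walk u v // p.length = l}

namespace StanleyAux

instance (n : ℕ) : DecidableRel (cubeGraph n).Adj :=
  fun u v => inferInstanceAs (Decidable (hammingDist u v = 1))

variable {n : ℕ}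

def chi (S x : Fin n → Bool) : ℤ := ∏ i, if S i ∧ x i then -1 else 1

def wt (S : Fin n → Bool) : ℕ := (univ.filter fun i => S i = true).card

lemma chi_update (S x : Fin n → Bool) (i : Fin n) :
    chi S (Function.update x i (!x i)) = (if S i then -1 else 1) * chi S x := by
  unfold chi
  rw [Finset.prod_eq_mul_prod_sdiff_singleton_of_mem (mem_univ i),
    Finset.prod_eq_mul_prod_sdiff_singleton_of_mem (mem_univ i)
      (f := fun j => if S j ∧ x j then (-1:ℤ) else 1)]
  have h : ∏ j ∈ univ \ {i}, (if S j ∧ Function.update x i (!x i) j then (-1:ℤ) else 1) =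
      ∏ j ∈ univ \ {i}, (if S j ∧ x j then (-1:ℤ) else 1) := by
    apply Finset.prod_congr rfl
    intro j hj
    rw [Function.update_of_ne (by simpa using (mem_sdiff.1 hj).2)]
  rw [h, Function.update_self]
  cases hS : S i <;> cases hx : x i <;> simp [hS, hx]

lemma adj_iff (u w : Fin n → Bool) :
    (cubeGraph n).Adj u w ↔ ∃ i, w = Function.update u i (!u i) := by
  constructor
  · intro h
    have h' : (univ.filter fun i => u i ≠ w i).card = 1 := h
    obtain ⟨i, hi⟩ := Finset.card_eq_one.1 h'
    refine ⟨i, funext fun j => ?_⟩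
    by_cases hj : j = i
    · subst hj
      have : u j ≠ w j := by
        have : j ∈ univ.filter fun i => u i ≠ w i := by rw [hi]; exact mem_singleton_self j
        simpa using this
      rw [Function.update_self]
      cases hu : u j <;> cases hw : w j <;> simp_all
    · have : j ∉ univ.filter fun i => u i ≠ w i := by rw [hi]; simpa using hj
      have huw : u j = w j := by simpa using this
      rw [Function.update_of_ne hj, huw]
  · rintro ⟨i, rfl⟩
    show hammingDist _ _ = 1
    have : (univ.filter fun j => u j ≠ Function.update u i (!u i) j) = {i} := by
      ext j
      by_cases hj : j = i
      · subst hj; simp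
      · simp [hj, Function.update_of_ne hj]
    show (univ.filter fun j => u j ≠ Function.update u i (!u i) j).card = 1
    rw [this, card_singleton]

lemma update_inj (u : Fin n → Bool) : Function.Injective
    (fun i => Function.update u i (!u i)) := by
  intro i j hij
  by_contra hne
  have h0 := congrFun hij i
  dsimp only at h0
  rw [Function.update_self, Function.update_of_ne hne] at h0
  cases h : u i <;> simp [h] at h0

lemma sum_sign (S : Fin n → Bool) :
    ∑ i : Fin n, (if S i then (-1:ℤ) else 1) = (n : ℤ) - 2 * wt S := by
  have h : ∀ i, (if S i then (-1:ℤ) else 1) = 1 - 2 * (if S i = true then 1 else 0) := by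
    intro i; cases h : S i <;> simp
  simp_rw [h]
  rw [Finset.sum_sub_distrib, Finset.sum_const, ← Finset.mul_sum, Finset.sum_boole]
  simp [wt]

lemma eigen (S u : Fin n → Bool) :
    ∑ w, (cubeGraph n).adjMatrix ℤ u w * chi S w = ((n:ℤ) - 2 * wt S) * chi S u := by
  have h1 : ∑ w, (cubeGraph n).adjMatrix ℤ u w * chi S w
      = ∑ w ∈ univ.filter ((cubeGraph n).Adj u), chi S w := by
    rw [Finset.sum_filter]
    apply Finset.sum_congr rfl
    intro w _
    rw [SimpleGraph.adjMatrix_apply]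
    split <;> simp
  have h2 : univ.filter ((cubeGraph n).Adj u)
      = univ.image (fun i => Function.update u i (!u i)) := by
    ext w
    simp only [mem_filter, mem_univ, true_and, mem_image, adj_iff]
    constructor
    · rintro ⟨i, h⟩; exact ⟨i, h.symm⟩
    · rintro ⟨i, h⟩; exact ⟨i, h.symm⟩
  rw [h1, h2, Finset.sum_image (fun i _ j _ h => update_inj u h)]
  calc ∑ i, chi S (Function.update u i (!u i))
      = ∑ i : Fin n, (if S i then (-1:ℤ) else 1) * chi S u := by
        apply Finset.sum_congr rfl; intro i _; rw [chi_update]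
    _ = (∑ i : Fin n, (if S i then (-1:ℤ) else 1)) * chi S u := by rw [Finset.sum_mul]
    _ = ((n:ℤ) - 2 * wt S) * chi S u := by rw [sum_sign]

lemma orth (u v : Fin n → Bool) :
    ∑ S : Fin n → Bool, chi S u * chi S v = if u = v then 2^n else 0 := by
  have h : ∀ S : Fin n → Bool, chi S u * chi S v =
      ∏ i, ((if S i ∧ u i then (-1:ℤ) else 1) * (if S i ∧ v i then (-1:ℤ) else 1)) := by
    intro S; rw [Finset.prod_mul_distrib]; rfl
  simp_rw [h]
  rw [show (univ : Finset (Fin n → Bool)) = Fintype.piFinset (fun _ => (univ : Finset Bool))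
      from Fintype.piFinset_univ.symm,
    ← Finset.prod_univ_sum (fun _ => (univ : Finset Bool))
      (fun i b => (if b ∧ u i then (-1:ℤ) else 1) * (if b ∧ v i then (-1:ℤ) else 1))]
  have hfac : ∀ i : Fin n, (∑ b : Bool, ((if b ∧ u i then (-1:ℤ) else 1) * (if b ∧ v i then (-1:ℤ) else 1))) = if u i = v i then 2 else 0 := by
    intro i
    rw [Fintype.sum_bool]
    cases hu : u i <;> cases hv : v i <;> norm_num
  simp_rw [hfac]
  by_cases huv : u = v
  · subst huv
    simp
  · obtain ⟨i, hi⟩ : ∃ i, u i ≠ v i := by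
      by_contra hc
      push_neg at hc
      exact huv (funext hc)
    rw [if_neg huv]
    exact Finset.prod_eq_zero (mem_univ i) (by simp [hi])

lemma key (l : ℕ) (u v : Fin n → Bool) :
    ∑ S : Fin n → Bool, chi S u * chi S v * ((n:ℤ) - 2 * wt S)^l
      = 2^n * ((cubeGraph n).adjMatrix ℤ ^ l) u v := by
  induction l generalizing v with
  | zero =>
    simp only [pow_zero, mul_one, Matrix.one_apply]
    rw [orth]
    split <;> simp
  | succ l ih =>
    have hsym : ∀ w x : Fin n → Bool,
        (cubeGraph n).adjMatrix ℤ w x = (cubeGraph n).adjMatrix ℤ x w := by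
      intro w x
      simp only [SimpleGraph.adjMatrix_apply, SimpleGraph.adj_comm]
    rw [pow_succ, Matrix.mul_apply, Finset.mul_sum]
    calc ∑ S : Fin n → Bool, chi S u * chi S v * ((n:ℤ) - 2 * wt S)^(l+1)
        = ∑ S : Fin n → Bool, (chi S u * ((n:ℤ) - 2 * wt S)^l) *
            (((n:ℤ) - 2 * wt S) * chi S v) := by
          apply Finset.sum_congr rfl; intro S _; ring
      _ = ∑ S : Fin n → Bool, (chi S u * ((n:ℤ) - 2 * wt S)^l) *
            (∑ w, (cubeGraph n).adjMatrix ℤ v w * chi S w) := by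
          apply Finset.sum_congr rfl; intro S _; rw [eigen]
      _ = ∑ S : Fin n → Bool, ∑ w, (chi S u * ((n:ℤ) - 2 * wt S)^l) *
            ((cubeGraph n).adjMatrix ℤ v w * chi S w) := by
          apply Finset.sum_congr rfl; intro S _; rw [Finset.mul_sum]
      _ = ∑ w, ∑ S : Fin n → Bool, (chi S u * ((n:ℤ) - 2 * wt S)^l) *
            ((cubeGraph n).adjMatrix ℤ v w * chi S w) := Finset.sum_comm
      _ = ∑ w, (∑ S : Fin n → Bool, chi S u * chi S w * ((n:ℤ) - 2 * wt S)^l) *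
            (cubeGraph n).adjMatrix ℤ w v := by
          apply Finset.sum_congr rfl; intro w _
          rw [Finset.sum_mul, hsym w v]
          apply Finset.sum_congr rfl; intro S _; ring
      _ = ∑ w, (2^n * ((cubeGraph n).adjMatrix ℤ ^ l) u w) *
            (cubeGraph n).adjMatrix ℤ w v := by
          apply Finset.sum_congr rfl; intro w _; rw [ih]
      _ = ∑ w, 2^n * (((cubeGraph n).adjMatrix ℤ ^ l) u w *
            (cubeGraph n).adjMatrix ℤ w v) := by
          apply Finset.sum_congr rfl; intro w _; ring


lemma chi_mul (u v S : Fin n → Bool) :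
    chi S u * chi S v =
      (-1)^(((univ.filter fun i => S i = true) ∩ (univ.filter fun i => u i ≠ v i)).card) := by
  have h : ∀ i : Fin n, (if S i ∧ u i then (-1:ℤ) else 1) * (if S i ∧ v i then (-1:ℤ) else 1)
      = if S i = true ∧ u i ≠ v i then -1 else 1 := by
    intro i; cases hS : S i <;> cases hu : u i <;> cases hv : v i <;> simp [hS, hu, hv]
  have h2 : chi S u * chi S v = ∏ i, if S i = true ∧ u i ≠ v i then (-1:ℤ) else 1 := by
    rw [chi, chi, ← Finset.prod_mul_distrib]; exact Finset.prod_congr rfl (fun i _ => h i)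
  rw [h2, Finset.prod_ite, Finset.prod_const, Finset.prod_const_one, mul_one,
      Finset.filter_and]

lemma powerset_sum {α : Type*} [DecidableEq α] (s : Finset α) (f : ℕ → ℤ) :
    ∑ a ∈ s.powerset, f a.card = ∑ j ∈ range (s.card + 1), (s.card.choose j : ℤ) * f j := by
  rw [Finset.sum_powerset]
  apply Finset.sum_congr rfl
  intro j hj
  rw [Finset.sum_powersetCard, nsmul_eq_mul]

lemma sum_finset (F : (Fin n → Bool) → ℤ) :
    ∑ s : Finset (Fin n), F (fun i => decide (i ∈ s)) = ∑ S : Fin n → Bool, F S := by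
  apply Fintype.sum_bijective (fun s : Finset (Fin n) => (fun i : Fin n => decide (i ∈ s)))
  · constructor
    · intro a b hab
      ext i
      have := congrFun hab i
      simpa using this
    · intro S
      refine ⟨univ.filter (fun i => S i = true), funext fun i => ?_⟩
      simp
  · intro s; rfl

lemma filter_decide (s : Finset (Fin n)) :
    (univ.filter fun i => (decide (i ∈ s)) = true) = s := by
  ext i; simp

end StanleyAux

/-- **Stanley's formula**: for vertices `u, v` of the hypercube `Q_n` at Hamming distance `d`,
`2^n · W_{n,l}(u,v) = Σ_{i=0}^{n} Σ_{j=0}^{d} 1_{j ≤ i} · C(d,j) · C(n−d,i−j) · (−1)^j · (n−2i)^l`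
as an identity of integers, where `W_{n,l}(u,v)` is the number of walks of length `l`
from `u` to `v`. -/
theorem stanley_formula (n l d : ℕ) (hd : d ≤ n) (u v : Fin n → Bool)
    (huv : hammingDist u v = d) :
    (2 : ℤ) ^ n * (walkCount n l u v : ℤ) =
      ∑ i ∈ Finset.range (n + 1), ∑ j ∈ Finset.range (d + 1),
        (if j ≤ i then
          (d.choose j : ℤ) * ((n - d).choose (i - j) : ℤ) * (-1) ^ j * ((n : ℤ) - 2 * i) ^ l
         else 0) := by
  classical
  have hA : (walkCount n l u v : ℤ) = ((cubeGraph n).adjMatrix ℤ ^ l) u v := by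
    rw [SimpleGraph.adjMatrix_pow_apply_eq_card_walk, walkCount, Nat.card_eq_fintype_card]
    congr 1
  rw [hA, ← StanleyAux.key]
  set T : Finset (Fin n) := univ.filter (fun i => u i ≠ v i) with hTdef
  have hTcard : T.card = d := huv
  have hTc : Tᶜ.card = n - d := by rw [Finset.card_compl, Fintype.card_fin, hTcard]
  -- Step 1 : reindex from Bool-functions to Finsets
  have step1 : (∑ S : Fin n → Bool,
        StanleyAux.chi S u * StanleyAux.chi S v * ((n:ℤ) - 2 * StanleyAux.wt S)^l)
      = ∑ s : Finset (Fin n), (-1:ℤ)^((s ∩ T).card) * ((n:ℤ) - 2 * (s.card : ℤ))^l := by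
    rw [← StanleyAux.sum_finset
      (fun S => StanleyAux.chi S u * StanleyAux.chi S v * ((n:ℤ) - 2 * StanleyAux.wt S)^l)]
    apply Finset.sum_congr rfl
    intro s _
    rw [StanleyAux.chi_mul]
    rw [show StanleyAux.wt (fun i => decide (i ∈ s)) = s.card by
      rw [StanleyAux.wt, StanleyAux.filter_decide]]
    rw [StanleyAux.filter_decide, ← hTdef]
  -- Step 2 : split a set into its parts inside and outside T
  have step2 : (∑ s : Finset (Fin n), (-1:ℤ)^((s ∩ T).card) * ((n:ℤ) - 2 * (s.card : ℤ))^l)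
      = ∑ p ∈ T.powerset ×ˢ Tᶜ.powerset,
          (-1:ℤ)^(p.1.card) * ((n:ℤ) - 2 * ((p.1.card + p.2.card : ℕ) : ℤ))^l := by
    rw [← Finset.powerset_univ]
    apply Finset.sum_nbij' (i := fun s => (s ∩ T, s \ T)) (j := fun p => p.1 ∪ p.2)
    · intro a _
      simp only [Finset.mem_product, Finset.mem_powerset]
      exact ⟨Finset.inter_subset_right,
        fun x hx => Finset.mem_compl.2 (Finset.mem_sdiff.1 hx).2⟩
    · intro p _
      exact Finset.mem_powerset.2 (Finset.subset_univ _)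
    · intro a _
      ext x
      simp only [Finset.mem_union, Finset.mem_inter, Finset.mem_sdiff]
      tauto
    · intro p hp
      simp only [Finset.mem_product, Finset.mem_powerset] at hp
      obtain ⟨ha, hb⟩ := hp
      have hbT : ∀ x ∈ p.2, x ∉ T := fun x hx => Finset.mem_compl.1 (hb hx)
      have h1 : (p.1 ∪ p.2) ∩ T = p.1 := by
        ext x
        simp only [Finset.mem_inter, Finset.mem_union]
        constructor
        · rintro ⟨h | h, hxT⟩
          · exact h
          · exact absurd hxT (hbT x h)
        · intro h; exact ⟨Or.inl h, ha h⟩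
      have h2 : (p.1 ∪ p.2) \ T = p.2 := by
        ext x
        simp only [Finset.mem_sdiff, Finset.mem_union]
        constructor
        · rintro ⟨h | h, hxT⟩
          · exact absurd (ha h) hxT
          · exact h
        · intro h; exact ⟨Or.inr h, hbT x h⟩
      rw [Prod.ext_iff]
      exact ⟨h1, h2⟩
    · intro a _
      rw [← Finset.card_inter_add_card_sdiff a T]
  -- Step 3 : powerset sums to binomial sums
  have step3 : (∑ p ∈ T.powerset ×ˢ Tᶜ.powerset,
          (-1:ℤ)^(p.1.card) * ((n:ℤ) - 2 * ((p.1.card + p.2.card : ℕ) : ℤ))^l)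
      = ∑ j ∈ Finset.range (d+1), (d.choose j : ℤ) *
          ∑ k ∈ Finset.range (n-d+1), (((n-d).choose k : ℕ) : ℤ) *
            ((-1:ℤ)^j * ((n:ℤ) - 2 * ((j + k : ℕ) : ℤ))^l) := by
    rw [Finset.sum_product]
    have e1 := StanleyAux.powerset_sum T (fun m => ∑ b ∈ Tᶜ.powerset,
      (-1:ℤ)^m * ((n:ℤ) - 2 * ((m + b.card : ℕ) : ℤ))^l)
    rw [hTcard] at e1
    refine e1.trans ?_
    apply Finset.sum_congr rfl
    intro j _
    congr 1
    have e2 := StanleyAux.powerset_sum Tᶜ (fun k =>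
      (-1:ℤ)^j * ((n:ℤ) - 2 * ((j + k : ℕ) : ℤ))^l)
    rw [hTc] at e2
    exact e2
  rw [step1, step2, step3, Finset.sum_comm]
  -- Step 4 : final reindexing
  apply Finset.sum_congr rfl
  intro j hj
  have hjd : j ≤ d := by simpa [Nat.lt_succ_iff] using hj
  have hmid : (∑ i ∈ Finset.range (n + 1),
        if j ≤ i then
          (d.choose j : ℤ) * ((n - d).choose (i - j) : ℤ) * (-1) ^ j * ((n : ℤ) - 2 * i) ^ l
        else 0)
      = ∑ k ∈ Finset.range (n + 1),
          (d.choose j : ℤ) * (((n-d).choose k : ℕ) : ℤ) * (-1:ℤ)^j *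
            ((n:ℤ) - 2 * ((j + k : ℕ) : ℤ))^l := by
    rw [← Finset.sum_filter]
    rw [show (Finset.range (n+1)).filter (fun i => j ≤ i) = Finset.Ico j (n+1) by
      ext i; simp [Finset.mem_Ico, Nat.lt_succ_iff, and_comm]]
    rw [Finset.sum_Ico_eq_sum_range]
    have hext : Finset.range (n + 1 - j) ⊆ Finset.range (n + 1) := by
      apply Finset.range_subset_range.2; omega
    rw [Finset.sum_subset hext]
    · apply Finset.sum_congr rfl
      intro k _
      rw [Nat.add_sub_cancel_left]
    · intro k hk hk'
      simp only [Finset.mem_range] at hk hk'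
      have : n - d < j + k - j := by omega
      rw [Nat.choose_eq_zero_of_lt this]
      simp
  rw [hmid, Finset.mul_sum]
  have hext2 : Finset.range (n - d + 1) ⊆ Finset.range (n + 1) := by
    apply Finset.range_subset_range.2; omega
  rw [Finset.sum_subset hext2]
  · apply Finset.sum_congr rfl
    intro k _
    ring
  · intro k hk hk'
    simp only [Finset.mem_range] at hk hk'
    have : n - d < k := by omega
    rw [Nat.choose_eq_zero_of_lt this]
    simp
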